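/- Let W_a = A(i_1,j_1)...A(i_n,j_n) be a chord word on m strands whose standard name is a name N of an n-diagram E, and let w_1,...,w_n ≥ 1 be integers. Then the chord word W = A(i_1,j_1)^{w_1}...A(i_n,j_n)^{w_n} on m strands (the r-th generator repeated w_r times consecutively, in place) is a braiding of the diagram represented by the blow-up of N with weights w_1,...,w_n. -/
import Mathlib


/-- A chord word on `m` strands: a list of generators `A(i,j)` recorded as pairs `(i,j)`
with `1 ≤ i < j ≤ m`. -/
def IsChordWord (m : ℕ) (W : List (ℕ × ℕ)) : Prop :=
  ∀ p ∈ W, 1 ≤ p.1 ∧ p.1 < p.2 ∧ p.2 ≤ m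

/-- The standard name read from a chord word `W` on `m` strands: concatenate, for each
strand `s = 1, …, m`, the increasing enumeration of the (1-based) indices `r` of the
generators of `W` having `s` as an endpoint. -/
def standardName (m : ℕ) (W : List (ℕ × ℕ)) : List ℕ :=
  (List.range m).flatMap fun s =>
    ((List.range W.length).filter
      (fun r => decide ((W.getD r (0, 0)).1 = s + 1 ∨ (W.getD r (0, 0)).2 = s + 1))).map
      (· + 1)

/-- `N` is a name of an `n`-diagram: a list of length `2n` over `{1, …, n}` in which
every label occurs exactly twice. -/
def IsName (n : ℕ) (N : List ℕ) : Prop :=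
  N.length = 2 * n ∧ ∀ r, 1 ≤ r → r ≤ n → N.count r = 2

/-- Two names represent the same `n`-diagram: one is obtained from the other by a cyclic
rotation followed by a relabeling (a bijection of `{1, …, n}` applied to all entries). -/
def SameDiagram (n : ℕ) (N M : List ℕ) : Prop :=
  ∃ (k : ℕ) (σ : Equiv.Perm ℕ),
    (∀ x, 1 ≤ x → x ≤ n → 1 ≤ σ x ∧ σ x ≤ n) ∧ M = (N.rotate k).map σ

/-- A chord word `W` on `m` strands is a braiding of the `n`-diagram named by `N` if the
standard name read from `W` is a name of that diagram. -/
def IsBraiding (n m : ℕ) (W : List (ℕ × ℕ)) (N : List ℕ) : Prop :=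
  IsChordWord m W ∧ SameDiagram n (standardName m W) N

/-- The braid index of the diagram named by `N`: the least number `m ≥ 1` of strands of
any braiding of the diagram. -/
noncomputable def braidIndex (n : ℕ) (N : List ℕ) : ℕ :=
  sInf {m | 1 ≤ m ∧ ∃ W, IsBraiding n m W N}

/-- The increasing list of the (0-based) positions at which `x` occurs in `N`. -/
def positionsOf (N : List ℕ) (x : ℕ) : List ℕ :=
  (List.range N.length).filter fun p => decide (N.getD p 0 = x)

/-- The canonical braiding of a name `N` of an `n`-diagram: the chord word
`A(i_1,j_1) ⋯ A(i_n,j_n)` on `2n` strands, where `i_r < j_r` are the two (1-based)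
positions at which the label `r` occurs in `N`. -/
def canonicalBraiding (n : ℕ) (N : List ℕ) : List (ℕ × ℕ) :=
  (List.range n).map fun r =>
    ((positionsOf N (r + 1)).getD 0 0 + 1, (positionsOf N (r + 1)).getD 1 0 + 1)

/-- Commutation move: interchange two adjacent generators with disjoint endpoint sets. -/
def CommMove (V W : List (ℕ × ℕ)) : Prop :=
  ∃ (U V' : List (ℕ × ℕ)) (i j k l : ℕ),
    i ≠ k ∧ i ≠ l ∧ j ≠ k ∧ j ≠ l ∧
    V = U ++ (i, j) :: (k, l) :: V' ∧ W = U ++ (k, l) :: (i, j) :: V'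

/-- Cyclic permutation move on `m` strands: replace `W'·A(i,j)` by `A(i+1,j+1)·W'` when
`j < m`, and `W'·A(i,m)` by `A(1,i+1)·W'`. -/
def CycMove (m : ℕ) (V W : List (ℕ × ℕ)) : Prop :=
  (∃ (U : List (ℕ × ℕ)) (i j : ℕ), j < m ∧ V = U ++ [(i, j)] ∧ W = (i + 1, j + 1) :: U) ∨
  (∃ (U : List (ℕ × ℕ)) (i : ℕ), V = U ++ [(i, m)] ∧ W = (1, i + 1) :: U)

/-- Stabilization move: replace the word `U·A(i,m)` on `m` strands by `U·A(i,m+1)` on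
`m+1` strands. Words are recorded together with their number of strands. -/
def StabMove (p q : ℕ × List (ℕ × ℕ)) : Prop :=
  ∃ (U : List (ℕ × ℕ)) (i m : ℕ),
    p = (m, U ++ [(i, m)]) ∧ q = (m + 1, U ++ [(i, m + 1)])

/-- A single move on chord-words-with-strand-count: a commutation move, a cyclic
permutation move (in either direction), or a stabilization move (in either direction). -/
def Move (p q : ℕ × List (ℕ × ℕ)) : Prop :=
  (p.1 = q.1 ∧ (CommMove p.2 q.2 ∨ CycMove p.1 p.2 q.2 ∨ CycMove p.1 q.2 p.2)) ∨
    StabMove p q ∨ StabMove q p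

/-- Two chord-words-with-strand-count are related by a finite sequence of commutation,
cyclic permutation and stabilization moves. -/
def MoveEquiv (p q : ℕ × List (ℕ × ℕ)) : Prop :=
  Relation.ReflTransGen Move p q

/-- A commutation or cyclic permutation move (in either direction) on `m` strands. -/
def CCMove (m : ℕ) (V W : List (ℕ × ℕ)) : Prop :=
  CommMove V W ∨ CycMove m V W ∨ CycMove m W V

/-- Related by a finite sequence of commutation and cyclic permutation moves. -/
def CCEquiv (m : ℕ) : List (ℕ × ℕ) → List (ℕ × ℕ) → Prop :=
  Relation.ReflTransGen (CCMove m)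

/-- Cyclic equivalence on `m` strands: related by a finite sequence of cyclic
permutation moves. -/
def CycEquiv (m : ℕ) : List (ℕ × ℕ) → List (ℕ × ℕ) → Prop :=
  Relation.ReflTransGen fun V W => CycMove m V W ∨ CycMove m W V

/-- Decrease by one every strand index greater than `j`. -/
def shiftGt (j : ℕ) (W : List (ℕ × ℕ)) : List (ℕ × ℕ) :=
  W.map fun p => ((if j < p.1 then p.1 - 1 else p.1), (if j < p.2 then p.2 - 1 else p.2))

/-- Decrease by one every strand index greater than or equal to `j`. -/
def shiftGe (j : ℕ) (W : List (ℕ × ℕ)) : List (ℕ × ℕ) :=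
  W.map fun p => ((if j ≤ p.1 then p.1 - 1 else p.1), (if j ≤ p.2 then p.2 - 1 else p.2))

/-- Decreasing stabilization: replace `U·A(i,j)·V` on `m` strands (where `i < j - 1`,
the strand index `j` does not occur in `U`, and `j - 1` does not occur in `V`) by
`U'·A(i,j-1)·V'` on `m - 1` strands, where `U'` is `U` with every index `> j` decreased
by one and `V'` is `V` with every index `≥ j` decreased by one. -/
def DecStab (p q : ℕ × List (ℕ × ℕ)) : Prop :=
  ∃ (U V : List (ℕ × ℕ)) (i j : ℕ),
    i + 1 < j ∧
    (∀ x ∈ U, x.1 ≠ j ∧ x.2 ≠ j) ∧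
    (∀ x ∈ V, x.1 ≠ j - 1 ∧ x.2 ≠ j - 1) ∧
    p.2 = U ++ (i, j) :: V ∧
    q = (p.1 - 1, shiftGt j U ++ (i, j - 1) :: shiftGe j V)

/-- The blow-up of a name `N` with weights `w`: both occurrences of each label `r` are
replaced by the same ordered block of `w r` distinct fresh labels. -/
def blowUp (w : ℕ → ℕ) (N : List ℕ) : List ℕ :=
  N.flatMap fun r => (List.range (w r)).map fun t => (∑ s ∈ Finset.Ico 1 r, w s) + t + 1

/-- The chord word obtained from `Wa` by repeating its `r`-th generator `w r` times
consecutively, in place. -/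
def powerWord (w : ℕ → ℕ) (Wa : List (ℕ × ℕ)) : List (ℕ × ℕ) :=
  (List.range Wa.length).flatMap fun r => List.replicate (w (r + 1)) (Wa.getD r (0, 0))

/-- The diagram named by `N` is amalgamated: no name of the diagram is (cyclically) of
the form `x y U x y V` with `x ≠ y`. -/
def Amalgamated (n : ℕ) (N : List ℕ) : Prop :=
  ¬∃ (x y : ℕ) (U V : List ℕ), x ≠ y ∧ SameDiagram n N (x :: y :: (U ++ x :: y :: V))

/-- The chords labeled `r` and `s` cross in the name `N`: their occurrences interleave
cyclically. -/
def Crosses (N : List ℕ) (r s : ℕ) : Prop :=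
  ∃ k, [r, s, r, s].Sublist (N.rotate k)

lemma list_sum_range_aux (g : ℕ → ℕ) (n : ℕ) :
    ((List.range n).map g).sum = ∑ i ∈ Finset.range n, g i := by
  induction n with
  | zero => simp
  | succ n ih => rw [List.range_succ, Finset.sum_range_succ]; simp [ih]

lemma filter_range_flatMap_aux {α : Type*} (Q : α → Bool) (f : ℕ → α) (g : ℕ → ℕ) (d : α)
    (n : ℕ) :
    (List.range (((List.range n).map g).sum)).filter
        (fun q => Q (((List.range n).flatMap fun r => List.replicate (g r) (f r)).getD q d))
      = ((List.range n).filter fun r => Q (f r)).flatMap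
          (fun r => (List.range (g r)).map (· + ((List.range r).map g).sum)) := by
  induction n with
  | zero => simp
  | succ n ih =>
    have hlen : ((List.range n).flatMap fun r => List.replicate (g r) (f r)).length
        = ((List.range n).map g).sum := by
      rw [List.length_flatMap]
      congr 1
      apply List.map_congr_left
      intro r _
      simp
    rw [List.range_succ]
    rw [List.flatMap_append, List.filter_append, List.flatMap_append]
    rw [List.map_append, List.sum_append, List.range_add]
    rw [List.filter_append]
    congr 1
    · rw [← ih]
      apply List.filter_congr
      intro q hq
      simp only [List.mem_range] at hq
      rw [List.getD_append _ _ _ _ (by rw [hlen]; simpa using hq)]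
    · simp only [List.flatMap_cons, List.flatMap_nil, List.append_nil]
      rw [List.filter_map]
      simp only [List.map_cons, List.map_nil, List.sum_cons, List.sum_nil, Nat.add_zero]
      have : ∀ t ∈ List.range (g n),
          ((fun q => Q ((((List.range n).flatMap fun r => List.replicate (g r) (f r)) ++
              List.replicate (g n) (f n)).getD q d)) ∘
            (fun x => ((List.range n).map g).sum + x)) t = Q (f n) := by
        intro t ht
        simp only [List.mem_range] at ht
        simp only [Function.comp]
        rw [List.getD_append_right _ _ _ _ (by rw [hlen]; omega)]
        rw [hlen]
        simp [List.getD, Nat.add_sub_cancel_left, ht]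
      rw [List.filter_congr this]
      by_cases hQ : Q (f n)
      · simp only [hQ, List.filter_true]
        simp only [List.filter_cons, hQ, List.filter_nil, if_true]
        simp only [List.flatMap_cons, List.flatMap_nil, List.append_nil]
        apply List.map_congr_left
        intro t _
        omega
      · simp only [List.filter_cons, List.filter_nil]
        simp [hQ]

lemma blowUp_standardName_aux (m : ℕ) (w : ℕ → ℕ) (Wa : List (ℕ × ℕ)) :
    blowUp w (standardName m Wa) = standardName m (powerWord w Wa) := by
  have hlen : (powerWord w Wa).length
      = ((List.range Wa.length).map (fun r => w (r + 1))).sum := by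
    rw [powerWord, List.length_flatMap]
    congr 1
    apply List.map_congr_left
    intro r _
    simp
  unfold standardName blowUp
  rw [List.flatMap_assoc]
  congr 1
  funext s
  rw [List.flatMap_map]
  rw [hlen]
  rw [show powerWord w Wa
      = (List.range Wa.length).flatMap
          (fun r => List.replicate (w (r + 1)) (Wa.getD r (0, 0))) from rfl]
  rw [filter_range_flatMap_aux (fun p => decide (p.1 = s + 1 ∨ p.2 = s + 1))
      (fun r => Wa.getD r (0, 0)) (fun r => w (r + 1)) (0, 0) Wa.length]
  rw [List.map_flatMap]
  congr 1
  funext r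
  rw [List.map_map]
  apply List.map_congr_left
  intro t _
  simp only [Function.comp]
  have hsum : (∑ s' ∈ Finset.Ico 1 (r + 1), w s')
      = ((List.range r).map (fun i => w (i + 1))).sum := by
    rw [Finset.sum_Ico_eq_sum_range, list_sum_range_aux]
    simp [Nat.add_comm]
  rw [hsum]
  omega

/-- If `Wa` is a chord word on `m` strands whose standard name is a name
`N` of an `n`-diagram `E`, and `w_1, …, w_n ≥ 1`, then the chord word obtained from `Wa`
by repeating its `r`-th generator `w_r` times consecutively (in place) is a braiding of
the diagram represented by the blow-up of `N` with weights `w_1, …, w_n`. -/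
theorem powerWord_isBraiding_blowUp (m n : ℕ) (Wa : List (ℕ × ℕ))
    (hWa : IsChordWord m Wa) (hn : n = Wa.length)
    (hname : IsName n (standardName m Wa))
    (w : ℕ → ℕ) (hw : ∀ r, 1 ≤ r → r ≤ n → 1 ≤ w r) :
    IsBraiding (∑ r ∈ Finset.Icc 1 n, w r) m (powerWord w Wa)
      (blowUp w (standardName m Wa)) := by
  constructor
  · intro p hp
    rw [powerWord, List.mem_flatMap] at hp
    obtain ⟨r, hr, hpr⟩ := hp
    simp only [List.mem_range] at hr
    rw [List.mem_replicate] at hpr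
    have : Wa.getD r (0, 0) ∈ Wa := by
      rw [List.getD_eq_getElem Wa (0,0) hr]
      exact List.getElem_mem hr
    exact hWa _ (hpr.2 ▸ this)
  · refine ⟨0, Equiv.refl ℕ, fun x h1 h2 => ⟨h1, h2⟩, ?_⟩
    rw [List.rotate_zero, blowUp_standardName_aux]
    simp
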